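/- For integer n ≥ 2 and real Δ with 0 ≤ Δ ≤ 1/(n−1), the function p ↦ 1 − n·p + (n−1)·p^{1+Δ} is nonincreasing and nonnegative on [0,1]; consequently the derivative of the perfect-CSI homogeneous power-capture throughput, dr/dp = (1−p)^{n−2}·(1 − n·p + (n−1)·p^{1+Δ}), is nonnegative on [0,1]. -/

import Mathlib

open Real

theorem stmt_12 (n : ℕ) (hn : 2 ≤ n) (Δ : ℝ) (hΔ0 : 0 ≤ Δ) (hΔ1 : Δ ≤ 1 / (n - 1 : ℝ)) :
    (AntitoneOn (fun p : ℝ => 1 - n * p + (n - 1 : ℝ) * p ^ (1 + Δ)) (Set.Icc 0 1) ∧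
      ∀ p ∈ Set.Icc (0 : ℝ) 1, 0 ≤ 1 - n * p + (n - 1 : ℝ) * p ^ (1 + Δ)) ∧
    ∀ p ∈ Set.Icc (0 : ℝ) 1,
      0 ≤ (1 - p) ^ (n - 2) * (1 - n * p + (n - 1 : ℝ) * p ^ (1 + Δ)) := by
  have hn1 : (1 : ℝ) ≤ (n : ℝ) - 1 := by
    have : (2 : ℝ) ≤ (n : ℝ) := by exact_mod_cast hn
    linarith
  have hn1' : (0 : ℝ) < (n : ℝ) - 1 := by linarith
  have hΔn : (n - 1 : ℝ) * Δ ≤ 1 := by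
    have := (le_div_iff₀ hn1').mp hΔ1
    linarith
  have hanti : AntitoneOn (fun p : ℝ => 1 - n * p + (n - 1 : ℝ) * p ^ (1 + Δ)) (Set.Icc 0 1) := by
    apply antitoneOn_of_deriv_nonpos (convex_Icc 0 1)
    · apply ContinuousOn.add
      · exact (continuousOn_const.sub (continuousOn_const.mul continuousOn_id))
      · apply continuousOn_const.mul
        intro x _
        exact (Real.continuousAt_rpow_const x (1 + Δ) (Or.inr (by linarith))).continuousWithinAt
    · rw [interior_Icc]
      intro x hx
      have hx0 : x ≠ 0 := ne_of_gt hx.1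
      have h1 : HasDerivAt (fun p : ℝ => p ^ (1 + Δ)) ((1 + Δ) * x ^ (1 + Δ - 1)) x :=
        Real.hasDerivAt_rpow_const (Or.inl hx0)
      have h2 : HasDerivAt (fun p : ℝ => 1 - n * p + (n - 1 : ℝ) * p ^ (1 + Δ))
          (-(n : ℝ) + (n - 1 : ℝ) * ((1 + Δ) * x ^ (1 + Δ - 1))) x := by
        have := ((hasDerivAt_const x (1:ℝ)).sub ((hasDerivAt_id x).const_mul (n:ℝ))).add
          (h1.const_mul (n - 1 : ℝ))
        exact this.congr_deriv (by simp)
      exact h2.differentiableAt.differentiableWithinAt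
    · rw [interior_Icc]
      intro x hx
      have hx0 : x ≠ 0 := ne_of_gt hx.1
      have h1 : HasDerivAt (fun p : ℝ => p ^ (1 + Δ)) ((1 + Δ) * x ^ (1 + Δ - 1)) x :=
        Real.hasDerivAt_rpow_const (Or.inl hx0)
      have h2 : HasDerivAt (fun p : ℝ => 1 - n * p + (n - 1 : ℝ) * p ^ (1 + Δ))
          (-(n : ℝ) + (n - 1 : ℝ) * ((1 + Δ) * x ^ (1 + Δ - 1))) x := by
        have := ((hasDerivAt_const x (1:ℝ)).sub ((hasDerivAt_id x).const_mul (n:ℝ))).add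
          (h1.const_mul (n - 1 : ℝ))
        exact this.congr_deriv (by simp)
      rw [h2.deriv]
      have hxΔ : x ^ (1 + Δ - 1) ≤ 1 := by
        have : 1 + Δ - 1 = Δ := by ring
        rw [this]
        exact Real.rpow_le_one (le_of_lt hx.1) (le_of_lt hx.2) hΔ0
      have hxΔ0 : 0 ≤ x ^ (1 + Δ - 1) := Real.rpow_nonneg (le_of_lt hx.1) _
      have hfac : (n - 1 : ℝ) * ((1 + Δ) * x ^ (1 + Δ - 1)) ≤ (n - 1 : ℝ) * (1 + Δ) := by
        have h1Δ : 0 ≤ 1 + Δ := by linarith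
        exact mul_le_mul_of_nonneg_left
          (by simpa using mul_le_mul_of_nonneg_left hxΔ h1Δ) (by linarith)
      have : (n - 1 : ℝ) * (1 + Δ) ≤ n := by nlinarith
      linarith
  have hnonneg : ∀ p ∈ Set.Icc (0 : ℝ) 1,
      0 ≤ 1 - n * p + (n - 1 : ℝ) * p ^ (1 + Δ) := by
    intro p hp
    have h1 : (1 : ℝ) ∈ Set.Icc (0 : ℝ) 1 := by constructor <;> norm_num
    have := hanti hp h1 hp.2
    simp only at this
    have hone : (1 : ℝ) ^ (1 + Δ) = 1 := Real.one_rpow _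
    rw [hone] at this
    linarith
  refine ⟨⟨hanti, hnonneg⟩, ?_⟩
  intro p hp
  apply mul_nonneg
  · exact pow_nonneg (by linarith [hp.2]) _
  · exact hnonneg p hp
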